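/- arXiv:2601.01164 — 3 statements merged into one kernel-verified Lean document; each statement's English description precedes it below -/
import Mathlib

section
/- Let G be a finite simple graph without isolated vertices. Then q(G) ≤ max over vertices u of η(u), where η(u) = d(u) + (1/d(u))·Σ_{v ∈ N(u)} d(v). -/
open scoped Classical

namespace OuterplanarQ

/-- Signless Laplacian matrix Q(G) = D(G) + A(G). -/
noncomputable def qMatrix {V : Type*} [Fintype V] (G : SimpleGraph V) : Matrix V V ℝ :=
  fun i j => (if i = j then (G.degree i : ℝ) else 0) + (if G.Adj i j then 1 else 0)

/-- The Q-index: the largest eigenvalue of Q(G). -/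
noncomputable def qIndex {V : Type*} [Fintype V] (G : SimpleGraph V) : ℝ :=
  sSup {μ : ℝ | ∃ x : V → ℝ, x ≠ 0 ∧ (qMatrix G).mulVec x = μ • x}

/-- Outerplanar: one-page book embedding characterization, i.e. the vertices admit a
linear ordering (injection into ℝ) such that no two edges interleave. -/
def IsOuterplanar {V : Type*} (G : SimpleGraph V) : Prop :=
  ∃ f : V → ℝ, Function.Injective f ∧
    ∀ a b c d : V, G.Adj a b → G.Adj c d →
      ¬ (f a < f c ∧ f c < f b ∧ f b < f d)

/-- `G` contains a copy of `F` as a subgraph. -/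
def ContainsCopy {α β : Type*} (G : SimpleGraph α) (F : SimpleGraph β) : Prop :=
  ∃ f : β → α, Function.Injective f ∧ ∀ a b : β, F.Adj a b → G.Adj (f a) (f b)

/-- Disjoint union of `t` copies of the path on `k` vertices. -/
def pathUnion (t k : ℕ) : SimpleGraph (Fin t × Fin k) where
  Adj a b := a.1 = b.1 ∧ (SimpleGraph.pathGraph k).Adj a.2 b.2
  symm := ⟨fun _ _ h => ⟨h.1.symm, h.2.symm⟩⟩
  loopless := ⟨fun a h => (SimpleGraph.pathGraph k).loopless.irrefl a.2 h.2⟩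

/-- Disjoint union of two graphs. -/
def disjSum {α β : Type*} (G : SimpleGraph α) (H : SimpleGraph β) : SimpleGraph (α ⊕ β) where
  Adj a b := match a, b with
    | Sum.inl x, Sum.inl y => G.Adj x y
    | Sum.inr x, Sum.inr y => H.Adj x y
    | _, _ => False
  symm := ⟨by rintro (x|x) (y|y) h <;> simp_all <;> exact h.symm⟩
  loopless := ⟨by rintro (x|x) h <;> simp_all⟩

/-- The join `K₁ ∨ H` of a single vertex with `H`. -/
def cone {V : Type*} (H : SimpleGraph V) : SimpleGraph (Option V) where
  Adj a b := match a, b with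
    | none, none => False
    | none, some _ => True
    | some _, none => True
    | some x, some y => H.Adj x y
  symm := ⟨by rintro (_|x) (_|y) h <;> simp_all <;> exact h.symm⟩
  loopless := ⟨by rintro (_|x) h <;> simp_all⟩

/-- A disjoint union of paths: acyclic with maximum degree at most 2. -/
def IsLinearForest {V : Type*} [Fintype V] (G : SimpleGraph V) : Prop :=
  G.IsAcyclic ∧ ∀ v : V, G.degree v ≤ 2

/-- The closed neighbourhood `N[u]`. -/
def closedNbhd {V : Type*} (G : SimpleGraph V) (u : V) : Set V :=
  insert u (G.neighborSet u)

/-- The graph obtained from `G` by adding the edge `uv`. -/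
def addEdge {V : Type*} (G : SimpleGraph V) (u v : V) : SimpleGraph V :=
  G ⊔ SimpleGraph.fromEdgeSet {s(u, v)}

/-- The graph obtained from `G` by deleting the edge `uv`. -/
def delEdge {V : Type*} (G : SimpleGraph V) (u v : V) : SimpleGraph V :=
  G.deleteEdges {s(u, v)}

/-- η(u) = d(u) + (1/d(u)) · Σ_{v ∈ N(u)} d(v). -/
noncomputable def eta {V : Type*} [Fintype V] (G : SimpleGraph V) (u : V) : ℝ :=
  (G.degree u : ℝ) + (1 / (G.degree u : ℝ)) * ∑ v ∈ G.neighborFinset u, (G.degree v : ℝ)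

/-- For a graph without isolated vertices, the `Q`-index is at most the maximum of
`η(u) = d(u) + (1/d(u)) Σ_{v ∈ N(u)} d(v)` over all vertices `u`. -/
theorem qIndex_le_max_eta
    {V : Type*} [Fintype V] [Nonempty V] (G : SimpleGraph V)
    (hiso : ∀ v : V, 0 < G.degree v) :
    ∃ u : V, qIndex G ≤ eta G u := by
  classical
  obtain ⟨u0, -, hu0⟩ := Finset.exists_max_image (Finset.univ : Finset V) (eta G)
    Finset.univ_nonempty
  refine ⟨u0, ?_⟩
  have hdpos : ∀ v : V, (0:ℝ) < (G.degree v : ℝ) := fun v => by exact_mod_cast hiso v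
  have hSnn : ∀ i : V, (0:ℝ) ≤ ∑ v ∈ G.neighborFinset i, (G.degree v : ℝ) := fun i =>
    Finset.sum_nonneg fun v _ => (hdpos v).le
  have hetann : ∀ i : V, (0:ℝ) ≤ eta G i := fun i =>
    add_nonneg (hdpos i).le
      (mul_nonneg (one_div_nonneg.mpr (hdpos i).le) (hSnn i))
  have hQnn : ∀ i j : V, (0:ℝ) ≤ qMatrix G i j := fun i j => by
    unfold qMatrix
    have := hdpos i
    positivity
  have hrow : ∀ i : V, ∑ v, qMatrix G i v * (G.degree v : ℝ)
      = (G.degree i : ℝ) * (G.degree i : ℝ)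
        + ∑ v ∈ G.neighborFinset i, (G.degree v : ℝ) := by
    intro i
    unfold qMatrix
    simp only [add_mul, Finset.sum_add_distrib, ite_mul, zero_mul, one_mul]
    congr 1
    · simp [Finset.sum_ite_eq]
    · rw [SimpleGraph.neighborFinset_eq_filter, Finset.sum_filter]
  apply Real.sSup_le _ (hetann u0)
  rintro μ ⟨x, hx, hxe⟩
  set y : V → ℝ := fun v => x v / (G.degree v : ℝ) with hy
  obtain ⟨u, -, hu⟩ := Finset.exists_max_image (Finset.univ : Finset V) (fun v => |y v|)
    Finset.univ_nonempty
  have hxv : ∀ v, x v = (G.degree v : ℝ) * y v := fun v => by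
    rw [hy, mul_comm, div_mul_cancel₀ _ (ne_of_gt (hdpos v))]
  have hypos : 0 < |y u| := by
    obtain ⟨w, hw⟩ := Function.ne_iff.mp hx
    have hyw : y w ≠ 0 := by
      rw [hy]
      exact div_ne_zero hw (ne_of_gt (hdpos w))
    exact lt_of_lt_of_le (abs_pos.mpr hyw) (hu w (Finset.mem_univ w))
  have hQx : ∑ v, qMatrix G u v * x v = μ * x u := by
    have := congrFun hxe u
    simpa [Matrix.mulVec, dotProduct] using this
  have key : |μ| * ((G.degree u : ℝ) * |y u|)
      ≤ ((G.degree u : ℝ) * (G.degree u : ℝ)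
        + ∑ v ∈ G.neighborFinset u, (G.degree v : ℝ)) * |y u| := by
    calc |μ| * ((G.degree u : ℝ) * |y u|) = |μ * x u| := by
          rw [abs_mul, hxv u, abs_mul, abs_of_pos (hdpos u)]
      _ = |∑ v, qMatrix G u v * x v| := by rw [hQx]
      _ ≤ ∑ v, |qMatrix G u v * x v| := Finset.abs_sum_le_sum_abs _ _
      _ ≤ ∑ v, qMatrix G u v * ((G.degree v : ℝ) * |y u|) := by
          apply Finset.sum_le_sum
          intro v _
          rw [abs_mul, abs_of_nonneg (hQnn u v), hxv v, abs_mul, abs_of_pos (hdpos v)]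
          exact mul_le_mul_of_nonneg_left
            (mul_le_mul_of_nonneg_left (hu v (Finset.mem_univ v)) (hdpos v).le) (hQnn u v)
      _ = ((G.degree u : ℝ) * (G.degree u : ℝ)
          + ∑ v ∈ G.neighborFinset u, (G.degree v : ℝ)) * |y u| := by
          rw [← hrow u, Finset.sum_mul]
          exact Finset.sum_congr rfl fun v _ => by ring
  have hmu : |μ| ≤ eta G u := by
    have hd := hdpos u
    have key2 : |μ| * (G.degree u : ℝ) ≤ (G.degree u : ℝ) * (G.degree u : ℝ)
        + ∑ v ∈ G.neighborFinset u, (G.degree v : ℝ) :=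
      le_of_mul_le_mul_right (by rw [mul_assoc]; exact key) hypos
    have heq : eta G u = ((G.degree u : ℝ) * (G.degree u : ℝ)
        + ∑ v ∈ G.neighborFinset u, (G.degree v : ℝ)) / (G.degree u : ℝ) := by
      unfold eta
      field_simp
    rw [heq, le_div_iff₀ hd]
    exact key2
  have : μ ≤ eta G u := le_trans (le_abs_self μ) hmu
  exact le_trans this (hu0 u (Finset.mem_univ u))
end OuterplanarQ
end

section
/- Let G be a connected finite simple graph with a vertex u such that the subgraph induced by N(u) is a disjoint union of paths and d(u) ≥ 5. Let w ∈ V(G) \ N[u] with N(w) = {v₁, v₂}, where v₁ and v₂ are adjacent vertices in N(u) satisfying N(v_i) \ (N[u] ∪ {w}) = ∅ for i = 1, 2. Then q(G − v₁v₂ + uw) > q(G). -/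
open scoped Classical

namespace OuterplanarQ

section Aux

variable {V : Type*} [Fintype V]

lemma sym_dot {A : Matrix V V ℝ} (hA : A.IsHermitian) (x y : V → ℝ) :
    dotProduct x (A.mulVec y) = dotProduct y (A.mulVec x) := by
  rw [Matrix.dotProduct_mulVec]
  have ht : Matrix.vecMul x A = A.mulVec x := by
    conv_lhs => rw [← hA.eq]
    rw [Matrix.conjTranspose_eq_transpose_of_trivial, Matrix.vecMul_transpose]
  rw [ht, dotProduct_comm]

lemma dot_euclid (f g : V → ℝ) :
    dotProduct f g =
      @inner ℝ _ _ ((WithLp.equiv 2 (V → ℝ)).symm f) ((WithLp.equiv 2 (V → ℝ)).symm g) := by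
  rw [PiLp.inner_apply]
  simp [dotProduct, RCLike.inner_apply]
  exact Finset.sum_congr rfl fun i _ => mul_comm _ _

lemma exists_top [Nonempty V] {A : Matrix V V ℝ} (hA : A.IsHermitian) :
    ∃ μ : ℝ, (∃ x : V → ℝ, x ≠ 0 ∧ A.mulVec x = μ • x) ∧
      ∀ z : V → ℝ, dotProduct z (A.mulVec z) ≤ μ * dotProduct z z := by
  obtain ⟨i₀, -, hmax⟩ := Finset.exists_max_image Finset.univ hA.eigenvalues
    ⟨Classical.arbitrary V, Finset.mem_univ _⟩
  refine ⟨hA.eigenvalues i₀, ⟨(WithLp.equiv 2 (V → ℝ)) (hA.eigenvectorBasis i₀), ?_, ?_⟩, ?_⟩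
  · intro h
    have h0 : hA.eigenvectorBasis i₀ = 0 := by
      apply (WithLp.equiv 2 (V → ℝ)).injective
      simpa using h
    have := hA.eigenvectorBasis.orthonormal.1 i₀
    rw [h0] at this
    simp at this
  · exact hA.mulVec_eigenvectorBasis i₀
  · intro z
    set z' : EuclideanSpace ℝ V := (WithLp.equiv 2 (V → ℝ)).symm z with hz'
    have hrepr : ∀ (y : EuclideanSpace ℝ V),
        @inner ℝ _ _ z' y = ∑ i, @inner ℝ _ _ z' (hA.eigenvectorBasis i) *
          @inner ℝ _ _ (hA.eigenvectorBasis i) y :=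
      fun y => (hA.eigenvectorBasis.sum_inner_mul_inner z' y).symm
    have hAz : dotProduct z (A.mulVec z)
        = ∑ i, hA.eigenvalues i * (@inner ℝ _ _ z' (hA.eigenvectorBasis i))^2 := by
      rw [dot_euclid, hrepr]
      refine Finset.sum_congr rfl fun i _ => ?_
      have h1 : @inner ℝ _ _ (hA.eigenvectorBasis i) ((WithLp.equiv 2 (V → ℝ)).symm (A.mulVec z))
          = hA.eigenvalues i * @inner ℝ _ _ z' (hA.eigenvectorBasis i) := by
        rw [show (hA.eigenvectorBasis i : EuclideanSpace ℝ V)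
            = (WithLp.equiv 2 (V → ℝ)).symm ((WithLp.equiv 2 (V → ℝ)) (hA.eigenvectorBasis i))
            from (Equiv.symm_apply_apply _ _).symm]
        rw [← dot_euclid, sym_dot hA, WithLp.equiv_apply, hA.mulVec_eigenvectorBasis, dotProduct_smul,
          dot_euclid, real_inner_comm]
        simp [hz', smul_eq_mul]
      rw [h1]; ring
    have hzz : dotProduct z z
        = ∑ i, (@inner ℝ _ _ z' (hA.eigenvectorBasis i))^2 := by
      rw [dot_euclid, hrepr]
      refine Finset.sum_congr rfl fun i _ => ?_
      rw [real_inner_comm z' (hA.eigenvectorBasis i)]; ring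
    rw [hAz, hzz, Finset.mul_sum]
    refine Finset.sum_le_sum fun i _ => ?_
    have := hmax i (Finset.mem_univ i)
    nlinarith [sq_nonneg (@inner ℝ _ _ z' (hA.eigenvectorBasis i))]


lemma dotProduct_self_pos {x : V → ℝ} (hx : x ≠ 0) : 0 < dotProduct x x := by
  obtain ⟨i, hi⟩ := Function.ne_iff.mp hx
  have h : (0:ℝ) < x i * x i := mul_self_pos.mpr hi
  calc (0:ℝ) < x i * x i := h
    _ ≤ dotProduct x x :=
        Finset.single_le_sum (f := fun j => x j * x j)
          (fun j _ => mul_self_nonneg _) (Finset.mem_univ i)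

/-- The eigenvalue set is attained at its sup, together with the Rayleigh bound. -/
lemma sSup_spec [Nonempty V] {A : Matrix V V ℝ} (hA : A.IsHermitian) :
    (∃ x : V → ℝ, x ≠ 0 ∧ A.mulVec x =
        (sSup {μ : ℝ | ∃ x : V → ℝ, x ≠ 0 ∧ A.mulVec x = μ • x}) • x) ∧
      ∀ z : V → ℝ, dotProduct z (A.mulVec z) ≤
        (sSup {μ : ℝ | ∃ x : V → ℝ, x ≠ 0 ∧ A.mulVec x = μ • x}) * dotProduct z z := by
  obtain ⟨μ, ⟨x, hx0, hx⟩, hray⟩ := exists_top hA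
  set S : Set ℝ := {μ : ℝ | ∃ x : V → ℝ, x ≠ 0 ∧ A.mulVec x = μ • x} with hS
  have hub : ∀ ν ∈ S, ν ≤ μ := by
    rintro ν ⟨z, hz0, hz⟩
    have h1 : dotProduct z (A.mulVec z) = ν * dotProduct z z := by
      rw [hz, dotProduct_smul, smul_eq_mul]
    have h2 := hray z
    rw [h1] at h2
    exact le_of_mul_le_mul_right (by linarith) (dotProduct_self_pos hz0)
  have hmem : μ ∈ S := ⟨x, hx0, hx⟩
  have hsup : sSup S = μ :=
    le_antisymm (csSup_le ⟨μ, hmem⟩ hub) (le_csSup ⟨μ, hub⟩ hmem)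
  rw [hsup]
  exact ⟨⟨x, hx0, hx⟩, hray⟩

/-- If `z` attains the Rayleigh bound then it is an eigenvector. -/
lemma eigen_of_eq {A : Matrix V V ℝ} (hA : A.IsHermitian) {μ : ℝ}
    (hray : ∀ z : V → ℝ, dotProduct z (A.mulVec z) ≤ μ * dotProduct z z)
    {y : V → ℝ} (heq : dotProduct y (A.mulVec y) = μ * dotProduct y y) :
    A.mulVec y = μ • y := by
  by_contra hne
  set m : V → ℝ := μ • y - A.mulVec y with hm
  have hm0 : m ≠ 0 := fun h => hne (by
    have := sub_eq_zero.mp h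
    rw [← this])
  have hmm : 0 < dotProduct m m := dotProduct_self_pos hm0
  have hmy : dotProduct m m
      = μ * dotProduct m y - dotProduct m (A.mulVec y) := by
    nth_rewrite 2 [hm]
    rw [dotProduct_sub, dotProduct_smul, smul_eq_mul]
  have key : ∀ t : ℝ, 0 ≤ (μ * dotProduct m m - dotProduct m (A.mulVec m))
      + 2 * t * dotProduct m m := by
    intro t
    have h := hray (m + t • y)
    have hexp : dotProduct (m + t • y) (A.mulVec (m + t • y))
        = dotProduct m (A.mulVec m) + 2 * t * dotProduct m (A.mulVec y)
          + t^2 * dotProduct y (A.mulVec y) := by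
      rw [Matrix.mulVec_add, Matrix.mulVec_smul]
      rw [add_dotProduct, dotProduct_add, dotProduct_add,
        smul_dotProduct, dotProduct_smul, dotProduct_smul,
        smul_dotProduct]
      rw [sym_dot hA y m]
      simp [smul_eq_mul]
      ring
    have hnorm : dotProduct (m + t • y) (m + t • y)
        = dotProduct m m + 2 * t * dotProduct m y
          + t^2 * dotProduct y y := by
      rw [add_dotProduct, dotProduct_add, dotProduct_add,
        smul_dotProduct, dotProduct_smul, dotProduct_smul,
        smul_dotProduct]
      rw [dotProduct_comm y m]
      simp [smul_eq_mul]
      ring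
    rw [hexp, hnorm] at h
    have h3 : 2*t*(μ * dotProduct m y) = 2*t* dotProduct m (A.mulVec y)
        + 2*t*dotProduct m m := by linear_combination (2*t) * hmy.symm
    have h4 : t^2 * dotProduct y (A.mulVec y)
        = t^2 * (μ * dotProduct y y) := by linear_combination (t^2) * heq
    nlinarith [h, h3, h4]
  set C : ℝ := μ * dotProduct m m - dotProduct m (A.mulVec m) with hC
  have hkey := key (-(C+1)/(2*dotProduct m m))
  have h5 : 2 * (-(C+1)/(2*dotProduct m m)) * dotProduct m m = -(C+1) := by
    field_simp
  linarith

/-- Perron: nonnegative eigenvector for the top eigenvalue, for entrywise-nonneg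
symmetric matrices. -/
lemma perron_nonneg [Nonempty V] {A : Matrix V V ℝ} (hA : A.IsHermitian)
    (hpos : ∀ i j, 0 ≤ A i j) :
    ∃ x : V → ℝ, x ≠ 0 ∧ (∀ v, 0 ≤ x v) ∧ A.mulVec x =
      (sSup {μ : ℝ | ∃ x : V → ℝ, x ≠ 0 ∧ A.mulVec x = μ • x}) • x := by
  obtain ⟨⟨x, hx0, hx⟩, hray⟩ := sSup_spec hA
  set q := sSup {μ : ℝ | ∃ x : V → ℝ, x ≠ 0 ∧ A.mulVec x = μ • x} with hq
  set y : V → ℝ := fun v => |x v| with hy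
  have hy0 : y ≠ 0 := by
    intro h
    apply hx0
    funext v
    have := congrFun h v
    simpa [hy, abs_eq_zero] using this
  have hyy : dotProduct y y = dotProduct x x := by
    unfold dotProduct
    refine Finset.sum_congr rfl fun i _ => ?_
    simp [hy, abs_mul_abs_self]
  have hxAx : dotProduct x (A.mulVec x) = q * dotProduct x x := by
    rw [hx, dotProduct_smul, smul_eq_mul]
  have hsum : ∀ z : V → ℝ, dotProduct z (A.mulVec z) = ∑ i, ∑ j, z i * (A i j * z j) := by
    intro z
    simp [dotProduct, Matrix.mulVec, Finset.mul_sum]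
  have hle : dotProduct x (A.mulVec x) ≤ dotProduct y (A.mulVec y) := by
    rw [hsum, hsum]
    refine Finset.sum_le_sum fun i _ => ?_
    refine Finset.sum_le_sum fun j _ => ?_
    calc x i * (A i j * x j) ≤ |x i * (A i j * x j)| := le_abs_self _
      _ = |x i| * (A i j * |x j|) := by
          rw [abs_mul, abs_mul, abs_of_nonneg (hpos i j)]
      _ = y i * (A i j * y j) := rfl
  have heq : dotProduct y (A.mulVec y) = q * dotProduct y y := by
    have h1 := hray y
    rw [hyy]
    rw [hyy] at h1
    linarith [hxAx ▸ hle]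
  exact ⟨y, hy0, fun v => abs_nonneg _, eigen_of_eq hA hray heq⟩


lemma qMatrix_isHermitian (G : SimpleGraph V) : (qMatrix G).IsHermitian := by
  ext i j
  simp only [Matrix.conjTranspose_apply, qMatrix, star_trivial]
  by_cases h : i = j
  · subst h; simp
  · simp [h, Ne.symm h, G.adj_comm]

lemma qMatrix_nonneg (G : SimpleGraph V) (i j : V) : 0 ≤ qMatrix G i j := by
  unfold qMatrix
  positivity

lemma qMatrix_mulVec (G : SimpleGraph V) (x : V → ℝ) (v : V) :
    (qMatrix G).mulVec x v = (G.degree v : ℝ) * x v + ∑ z ∈ G.neighborFinset v, x z := by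
  unfold qMatrix Matrix.mulVec dotProduct
  rw [Finset.sum_congr rfl (fun j _ => add_mul _ _ (x j)), Finset.sum_add_distrib]
  congr 1
  · rw [Finset.sum_eq_single v]
    · simp
    · intro b _ hb; simp [Ne.symm hb]
    · intro h; exact absurd (Finset.mem_univ v) h
  · rw [SimpleGraph.neighborFinset_eq_filter, Finset.sum_filter]
    exact Finset.sum_congr rfl fun j _ => by by_cases h : G.Adj v j <;> simp [h]

lemma perron_pos {G : SimpleGraph V} (hconn : G.Connected) {q : ℝ} {x : V → ℝ}
    (hx0 : x ≠ 0) (hnn : ∀ v, 0 ≤ x v)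
    (heig : (qMatrix G).mulVec x = q • x) : ∀ v, 0 < x v := by
  have hzero : ∀ a b : V, G.Walk a b → x a = 0 → x b = 0 := by
    intro a b p
    induction p with
    | nil => exact id
    | cons h p ih =>
        rename_i c d e
        intro ha
        apply ih
        have he := congrFun heig c
        rw [qMatrix_mulVec] at he
        simp only [Pi.smul_apply, smul_eq_mul, ha, mul_zero] at he
        have hsum : ∑ z ∈ G.neighborFinset c, x z = 0 := by linarith
        have := (Finset.sum_eq_zero_iff_of_nonneg (fun z _ => hnn z)).mp hsum d
          (by rwa [SimpleGraph.mem_neighborFinset])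
        exact this
  obtain ⟨c, hc⟩ := Function.ne_iff.mp hx0
  intro v
  rcases lt_or_eq_of_le (hnn v) with h | h
  · exact h
  · exfalso
    obtain ⟨p⟩ := hconn v c
    exact hc (hzero v c p h.symm)


lemma perron_qIndex (G : SimpleGraph V) (hconn : G.Connected) :
    ∃ x : V → ℝ, (∀ v, 0 < x v) ∧ (qMatrix G).mulVec x = qIndex G • x := by
  have : Nonempty V := hconn.nonempty
  obtain ⟨x, hx0, hnn, hx⟩ := perron_nonneg (qMatrix_isHermitian G) (qMatrix_nonneg G)
  exact ⟨x, perron_pos hconn hx0 hnn hx, hx⟩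

lemma inter_card_le (G : SimpleGraph V) (u v : V) (hv : v ∈ G.neighborSet u)
    (hlin : IsLinearForest (G.induce (G.neighborSet u))) :
    (G.neighborFinset v ∩ G.neighborFinset u).card ≤ 2 := by
  classical
  set H := G.induce (G.neighborSet u) with hH
  have hsub : (G.neighborFinset v ∩ G.neighborFinset u)
      ⊆ (H.neighborFinset ⟨v, hv⟩).image Subtype.val := by
    intro z hz
    rw [Finset.mem_inter] at hz
    obtain ⟨hz1, hz2⟩ := hz
    rw [SimpleGraph.mem_neighborFinset] at hz1 hz2
    refine Finset.mem_image.mpr ⟨⟨z, hz2⟩, ?_, rfl⟩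
    rw [SimpleGraph.mem_neighborFinset]
    exact hz1
  calc (G.neighborFinset v ∩ G.neighborFinset u).card
      ≤ ((H.neighborFinset ⟨v, hv⟩).image Subtype.val).card := Finset.card_le_card hsub
    _ ≤ (H.neighborFinset ⟨v, hv⟩).card := Finset.card_image_le
    _ = H.degree ⟨v, hv⟩ := (SimpleGraph.card_neighborFinset_eq_degree _ _)
    _ ≤ 2 := hlin.2 _

lemma no_common_nbr (G : SimpleGraph V) (u v₁ v₂ p : V)
    (hv₁ : v₁ ∈ G.neighborSet u) (hv₂ : v₂ ∈ G.neighborSet u)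
    (hp : p ∈ G.neighborSet u)
    (hadj : G.Adj v₁ v₂) (h1 : G.Adj v₁ p) (h2 : G.Adj v₂ p)
    (hlin : IsLinearForest (G.induce (G.neighborSet u))) : False := by
  classical
  set H := G.induce (G.neighborSet u) with hH
  set a : ↑(G.neighborSet u) := ⟨v₁, hv₁⟩
  set b : ↑(G.neighborSet u) := ⟨v₂, hv₂⟩
  set c : ↑(G.neighborSet u) := ⟨p, hp⟩
  have hab : H.Adj a b := hadj
  have hac : H.Adj a c := h1
  have hbc : H.Adj b c := h2
  have hbr := SimpleGraph.isAcyclic_iff_forall_adj_isBridge.mp hlin.1 hab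
  rw [SimpleGraph.isBridge_iff] at hbr
  apply hbr
  have hadj1 : (H \ SimpleGraph.fromEdgeSet {s(a, b)}).Adj a c := by
    rw [SimpleGraph.sdiff_adj]
    refine ⟨hac, ?_⟩
    rw [SimpleGraph.fromEdgeSet_adj]
    rintro ⟨hmem, -⟩
    rw [Set.mem_singleton_iff, Sym2.eq_iff] at hmem
    rcases hmem with ⟨-, h⟩ | ⟨h, -⟩
    · exact h2.ne' (congrArg Subtype.val h)
    · exact hadj.ne (congrArg Subtype.val h)
  have hadj2 : (H \ SimpleGraph.fromEdgeSet {s(a, b)}).Adj c b := by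
    rw [SimpleGraph.sdiff_adj]
    refine ⟨hbc.symm, ?_⟩
    rw [SimpleGraph.fromEdgeSet_adj]
    rintro ⟨hmem, -⟩
    rw [Set.mem_singleton_iff, Sym2.eq_iff] at hmem
    rcases hmem with ⟨h, -⟩ | ⟨h, -⟩
    · exact h1.ne' (congrArg Subtype.val h)
    · exact h2.ne' (congrArg Subtype.val h)
  exact hadj1.reachable.trans hadj2.reachable



end Aux

set_option maxHeartbeats 2000000 in
/-- Lemma 2.8 of the paper: if `G[N(u)]` is a disjoint union of paths, `d(u) ≥ 5`,
`w ∉ N[u]` with `N(w) = {v₁, v₂}` where `v₁ v₂` is an edge of `G[N(u)]` and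
`N(vᵢ) \ (N[u] ∪ {w}) = ∅` for `i = 1, 2`, then `q(G - v₁v₂ + uw) > q(G)`. -/
theorem qIndex_lt_delete_add
    {V : Type*} [Fintype V] (G : SimpleGraph V) (hconn : G.Connected)
    (u : V) (hlin : IsLinearForest (G.induce (G.neighborSet u))) (hdu : 5 ≤ G.degree u)
    (w v₁ v₂ : V) (hw : w ∉ closedNbhd G u) (hv₁₂ : v₁ ≠ v₂)
    (hNw : G.neighborSet w = {v₁, v₂})
    (hv₁ : v₁ ∈ G.neighborSet u) (hv₂ : v₂ ∈ G.neighborSet u) (hadj : G.Adj v₁ v₂)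
    (h₁ : G.neighborSet v₁ \ (closedNbhd G u ∪ {w}) = ∅)
    (h₂ : G.neighborSet v₂ \ (closedNbhd G u ∪ {w}) = ∅) :
    qIndex G < qIndex (addEdge (delEdge G v₁ v₂) u w) := by
  classical
  have hNe : Nonempty V := hconn.nonempty
  set G' : SimpleGraph V := addEdge (delEdge G v₁ v₂) u w with hG'
  -- basic adjacencies and distinctness
  have hadj_uv₁ : G.Adj u v₁ := hv₁
  have hadj_uv₂ : G.Adj u v₂ := hv₂
  have hwv₁ : G.Adj w v₁ := by
    have : v₁ ∈ G.neighborSet w := by rw [hNw]; exact Set.mem_insert _ _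
    exact this
  have hwv₂ : G.Adj w v₂ := by
    have : v₂ ∈ G.neighborSet w := by
      rw [hNw]; exact Set.mem_insert_of_mem _ rfl
    exact this
  have huw : u ≠ w := fun h => hw (h ▸ Set.mem_insert _ _)
  have hadj_uw : ¬ G.Adj u w := fun h => hw (Set.mem_insert_of_mem _ h)
  have huv₁ : u ≠ v₁ := hadj_uv₁.ne
  have huv₂ : u ≠ v₂ := hadj_uv₂.ne
  have hwv₁' : w ≠ v₁ := hwv₁.ne
  have hwv₂' : w ≠ v₂ := hwv₂.ne
  have hwNu : w ∉ G.neighborFinset u := by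
    rw [SimpleGraph.mem_neighborFinset]; exact hadj_uw
  -- neighborhood of w
  have hNwF : G.neighborFinset w = {v₁, v₂} := by
    ext z
    rw [SimpleGraph.mem_neighborFinset, ← SimpleGraph.mem_neighborSet, hNw]
    simp
  have hdegw : G.degree w = 2 := by
    rw [← SimpleGraph.card_neighborFinset_eq_degree, hNwF]
    rw [Finset.card_insert_of_notMem (by simpa using hv₁₂), Finset.card_singleton]
  -- neighborhoods of v₁, v₂
  have hsubset₁ : ∀ z, G.Adj v₁ z → z = u ∨ z = w ∨ z ∈ G.neighborFinset u := by
    intro z hz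
    have hmem : z ∈ closedNbhd G u ∪ {w} := by
      have := Set.diff_eq_empty.mp h₁
      exact this hz
    rcases hmem with hc | hc
    · rcases hc with hc | hc
      · exact Or.inl hc
      · exact Or.inr (Or.inr (by rwa [SimpleGraph.mem_neighborFinset]))
    · exact Or.inr (Or.inl hc)
  have hsubset₂ : ∀ z, G.Adj v₂ z → z = u ∨ z = w ∨ z ∈ G.neighborFinset u := by
    intro z hz
    have hmem : z ∈ closedNbhd G u ∪ {w} := by
      have := Set.diff_eq_empty.mp h₂
      exact this hz
    rcases hmem with hc | hc
    · rcases hc with hc | hc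
      · exact Or.inl hc
      · exact Or.inr (Or.inr (by rwa [SimpleGraph.mem_neighborFinset]))
    · exact Or.inr (Or.inl hc)
  -- the extra-neighbor sets
  set P₁ : Finset V := (G.neighborFinset v₁ ∩ G.neighborFinset u).erase v₂ with hP₁
  set P₂ : Finset V := (G.neighborFinset v₂ ∩ G.neighborFinset u).erase v₁ with hP₂
  have hP₁nu : u ∉ P₁ := by
    intro h
    have := Finset.mem_of_mem_erase h
    rw [Finset.mem_inter, SimpleGraph.mem_neighborFinset, SimpleGraph.mem_neighborFinset] at this
    exact G.loopless.irrefl u this.2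
  have hP₂nu : u ∉ P₂ := by
    intro h
    have := Finset.mem_of_mem_erase h
    rw [Finset.mem_inter, SimpleGraph.mem_neighborFinset, SimpleGraph.mem_neighborFinset] at this
    exact G.loopless.irrefl u this.2
  have hP₁nw : w ∉ P₁ := by
    intro h
    have := Finset.mem_of_mem_erase h
    rw [Finset.mem_inter, SimpleGraph.mem_neighborFinset, SimpleGraph.mem_neighborFinset] at this
    exact hadj_uw this.2
  have hP₂nw : w ∉ P₂ := by
    intro h
    have := Finset.mem_of_mem_erase h
    rw [Finset.mem_inter, SimpleGraph.mem_neighborFinset, SimpleGraph.mem_neighborFinset] at this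
    exact hadj_uw this.2
  have hNv₁sub : G.neighborFinset v₁ ⊆ insert u (insert w (insert v₂ P₁)) := by
    intro z hz
    rw [SimpleGraph.mem_neighborFinset] at hz
    rcases hsubset₁ z hz with h | h | h
    · exact Finset.mem_insert.mpr (Or.inl h)
    · exact Finset.mem_insert.mpr (Or.inr (Finset.mem_insert.mpr (Or.inl h)))
    · by_cases hzv : z = v₂
      · exact Finset.mem_insert.mpr (Or.inr (Finset.mem_insert.mpr (Or.inr
          (Finset.mem_insert.mpr (Or.inl hzv)))))
      · refine Finset.mem_insert.mpr (Or.inr (Finset.mem_insert.mpr (Or.inr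
          (Finset.mem_insert.mpr (Or.inr ?_)))))
        exact Finset.mem_erase.mpr ⟨hzv, Finset.mem_inter.mpr
          ⟨(SimpleGraph.mem_neighborFinset _ _ _).mpr hz, h⟩⟩
  have hNv₂sub : G.neighborFinset v₂ ⊆ insert u (insert w (insert v₁ P₂)) := by
    intro z hz
    rw [SimpleGraph.mem_neighborFinset] at hz
    rcases hsubset₂ z hz with h | h | h
    · exact Finset.mem_insert.mpr (Or.inl h)
    · exact Finset.mem_insert.mpr (Or.inr (Finset.mem_insert.mpr (Or.inl h)))
    · by_cases hzv : z = v₁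
      · exact Finset.mem_insert.mpr (Or.inr (Finset.mem_insert.mpr (Or.inr
          (Finset.mem_insert.mpr (Or.inl hzv)))))
      · refine Finset.mem_insert.mpr (Or.inr (Finset.mem_insert.mpr (Or.inr
          (Finset.mem_insert.mpr (Or.inr ?_)))))
        exact Finset.mem_erase.mpr ⟨hzv, Finset.mem_inter.mpr
          ⟨(SimpleGraph.mem_neighborFinset _ _ _).mpr hz, h⟩⟩
  have hcardP₁ : P₁.card ≤ 1 := by
    have h2 := inter_card_le G u v₁ hv₁ hlin
    have hv₂mem : v₂ ∈ G.neighborFinset v₁ ∩ G.neighborFinset u := by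
      rw [Finset.mem_inter, SimpleGraph.mem_neighborFinset, SimpleGraph.mem_neighborFinset]
      exact ⟨hadj, hv₂⟩
    rw [hP₁, Finset.card_erase_of_mem hv₂mem]
    omega
  have hcardP₂ : P₂.card ≤ 1 := by
    have h2 := inter_card_le G u v₂ hv₂ hlin
    have hv₁mem : v₁ ∈ G.neighborFinset v₂ ∩ G.neighborFinset u := by
      rw [Finset.mem_inter, SimpleGraph.mem_neighborFinset, SimpleGraph.mem_neighborFinset]
      exact ⟨hadj.symm, hv₁⟩
    rw [hP₂, Finset.card_erase_of_mem hv₁mem]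
    omega
  have hdegv₁ : G.degree v₁ ≤ 4 := by
    rw [← SimpleGraph.card_neighborFinset_eq_degree]
    calc (G.neighborFinset v₁).card ≤ (insert u (insert w (insert v₂ P₁))).card :=
          Finset.card_le_card hNv₁sub
      _ ≤ (insert w (insert v₂ P₁)).card + 1 := Finset.card_insert_le _ _
      _ ≤ (insert v₂ P₁).card + 1 + 1 := by
          have := Finset.card_insert_le w (insert v₂ P₁); omega
      _ ≤ P₁.card + 1 + 1 + 1 := by
          have := Finset.card_insert_le v₂ P₁; omega
      _ ≤ 4 := by omega
  have hdegv₂ : G.degree v₂ ≤ 4 := by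
    rw [← SimpleGraph.card_neighborFinset_eq_degree]
    calc (G.neighborFinset v₂).card ≤ (insert u (insert w (insert v₁ P₂))).card :=
          Finset.card_le_card hNv₂sub
      _ ≤ (insert w (insert v₁ P₂)).card + 1 := Finset.card_insert_le _ _
      _ ≤ (insert v₁ P₂).card + 1 + 1 := by
          have := Finset.card_insert_le w (insert v₁ P₂); omega
      _ ≤ P₂.card + 1 + 1 + 1 := by
          have := Finset.card_insert_le v₁ P₂; omega
      _ ≤ 4 := by omega
  have hPdisj : Disjoint P₁ P₂ := by
    rw [Finset.disjoint_left]
    intro p hp1 hp2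
    have hm1 := Finset.mem_of_mem_erase hp1
    have hm2 := Finset.mem_of_mem_erase hp2
    simp only [Finset.mem_inter, SimpleGraph.mem_neighborFinset] at hm1 hm2
    exact no_common_nbr G u v₁ v₂ p hv₁ hv₂ hm1.2 hadj hm1.1 hm2.1 hlin
  have hPunion : P₁ ∪ P₂ ⊆ ((G.neighborFinset u).erase v₂).erase v₁ := by
    intro p hp
    rcases Finset.mem_union.mp hp with hp | hp
    · have hm := Finset.mem_of_mem_erase hp
      rw [Finset.mem_inter] at hm
      refine Finset.mem_erase.mpr ⟨?_, Finset.mem_erase.mpr ⟨Finset.ne_of_mem_erase hp, hm.2⟩⟩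
      intro h
      subst h
      exact G.loopless.irrefl p ((SimpleGraph.mem_neighborFinset _ _ _).mp hm.1)
    · have hm := Finset.mem_of_mem_erase hp
      rw [Finset.mem_inter] at hm
      refine Finset.mem_erase.mpr ⟨Finset.ne_of_mem_erase hp, Finset.mem_erase.mpr ⟨?_, hm.2⟩⟩
      intro h
      subst h
      exact G.loopless.irrefl p ((SimpleGraph.mem_neighborFinset _ _ _).mp hm.1)
  -- G' adjacency
  have hG'Adj : ∀ a b, G'.Adj a b ↔
      (G.Adj a b ∧ ¬((a = v₁ ∧ b = v₂) ∨ (a = v₂ ∧ b = v₁))) ∨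
        ((a = u ∧ b = w) ∨ (a = w ∧ b = u)) := by
    intro a b
    rw [hG']
    unfold addEdge delEdge
    rw [SimpleGraph.sup_adj, SimpleGraph.deleteEdges_adj, SimpleGraph.fromEdgeSet_adj]
    simp only [Set.mem_singleton_iff, Sym2.eq_iff]
    constructor
    · rintro (⟨h, hn⟩ | ⟨h, -⟩)
      · exact Or.inl ⟨h, hn⟩
      · exact Or.inr h
    · rintro (⟨h, hn⟩ | h)
      · exact Or.inl ⟨h, hn⟩
      · refine Or.inr ⟨h, ?_⟩
        rcases h with ⟨rfl, rfl⟩ | ⟨rfl, rfl⟩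
        · exact huw
        · exact huw.symm
  have hv₁u : v₁ ≠ u := huv₁.symm
  have hv₂u : v₂ ≠ u := huv₂.symm
  have hv₁w : v₁ ≠ w := hwv₁'.symm
  have hv₂w : v₂ ≠ w := hwv₂'.symm
  have hwu : w ≠ u := huw.symm
  have hv₂₁ : v₂ ≠ v₁ := hv₁₂.symm
  have hwadj : ∀ z, G.Adj w z ↔ (z = v₁ ∨ z = v₂) := by
    intro z
    rw [← SimpleGraph.mem_neighborSet, hNw]
    simp
  have hN'u : G'.neighborFinset u = insert w (G.neighborFinset u) := by
    ext z
    rw [SimpleGraph.mem_neighborFinset, hG'Adj, Finset.mem_insert,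
      SimpleGraph.mem_neighborFinset]
    constructor
    · rintro (⟨h, -⟩ | ⟨-, rfl⟩ | ⟨h, -⟩)
      · exact Or.inr h
      · exact Or.inl rfl
      · exact absurd h huw
    · rintro (rfl | h)
      · exact Or.inr (Or.inl ⟨rfl, rfl⟩)
      · exact Or.inl ⟨h, by rintro (⟨h5, -⟩ | ⟨h5, -⟩); exacts [huv₁ h5, huv₂ h5]⟩
  have hN'w : G'.neighborFinset w = insert u {v₁, v₂} := by
    ext z
    rw [SimpleGraph.mem_neighborFinset, hG'Adj, hwadj, Finset.mem_insert,
      Finset.mem_insert, Finset.mem_singleton]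
    constructor
    · rintro (⟨h, -⟩ | ⟨h, -⟩ | ⟨-, rfl⟩)
      · exact Or.inr h
      · exact absurd h hwu
      · exact Or.inl rfl
    · rintro (rfl | rfl | rfl)
      · exact Or.inr (Or.inr ⟨rfl, rfl⟩)
      · exact Or.inl ⟨Or.inl rfl, by rintro (⟨h5, -⟩ | ⟨h5, -⟩); exacts [hwv₁' h5, hwv₂' h5]⟩
      · exact Or.inl ⟨Or.inr rfl, by rintro (⟨h5, -⟩ | ⟨h5, -⟩); exacts [hwv₁' h5, hwv₂' h5]⟩
  have hN'v₁ : G'.neighborFinset v₁ = (G.neighborFinset v₁).erase v₂ := by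
    ext z
    rw [SimpleGraph.mem_neighborFinset, hG'Adj, Finset.mem_erase,
      SimpleGraph.mem_neighborFinset]
    constructor
    · rintro (⟨h, hn⟩ | ⟨h, -⟩ | ⟨h, -⟩)
      · exact ⟨fun hz => hn (Or.inl ⟨rfl, hz⟩), h⟩
      · exact absurd h hv₁u
      · exact absurd h hv₁w
    · rintro ⟨hz, h⟩
      exact Or.inl ⟨h, by rintro (⟨-, h5⟩ | ⟨h5, -⟩); exacts [hz h5, hv₁₂ h5]⟩
  have hN'v₂ : G'.neighborFinset v₂ = (G.neighborFinset v₂).erase v₁ := by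
    ext z
    rw [SimpleGraph.mem_neighborFinset, hG'Adj, Finset.mem_erase,
      SimpleGraph.mem_neighborFinset]
    constructor
    · rintro (⟨h, hn⟩ | ⟨h, -⟩ | ⟨h, -⟩)
      · exact ⟨fun hz => hn (Or.inr ⟨rfl, hz⟩), h⟩
      · exact absurd h hv₂u
      · exact absurd h hv₂w
    · rintro ⟨hz, h⟩
      exact Or.inl ⟨h, by rintro (⟨h5, -⟩ | ⟨-, h5⟩); exacts [hv₂₁ h5, hz h5]⟩
  have hN'other : ∀ v, v ≠ u → v ≠ w → v ≠ v₁ → v ≠ v₂ →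
      G'.neighborFinset v = G.neighborFinset v := by
    intro v h1 h2 h3 h4
    ext z
    rw [SimpleGraph.mem_neighborFinset, hG'Adj, SimpleGraph.mem_neighborFinset]
    constructor
    · rintro (⟨h, -⟩ | ⟨h5, -⟩ | ⟨h5, -⟩)
      · exact h
      · exact absurd h5 h1
      · exact absurd h5 h2
    · intro h
      exact Or.inl ⟨h, by rintro (⟨h5, -⟩ | ⟨h5, -⟩); exacts [h3 h5, h4 h5]⟩
  -- degrees in G'
  have hdeg'u : G'.degree u = G.degree u + 1 := by
    rw [← SimpleGraph.card_neighborFinset_eq_degree, hN'u,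
      Finset.card_insert_of_notMem hwNu, SimpleGraph.card_neighborFinset_eq_degree]
  have hdeg'w : G'.degree w = 3 := by
    rw [← SimpleGraph.card_neighborFinset_eq_degree, hN'w]
    rw [Finset.card_insert_of_notMem (by simp [huv₁, huv₂]),
      Finset.card_insert_of_notMem (by simpa using hv₁₂), Finset.card_singleton]
  have hdeg'v₁ : G'.degree v₁ = G.degree v₁ - 1 := by
    rw [← SimpleGraph.card_neighborFinset_eq_degree, hN'v₁,
      Finset.card_erase_of_mem (by rw [SimpleGraph.mem_neighborFinset]; exact hadj),
      SimpleGraph.card_neighborFinset_eq_degree]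
  have hdeg'v₂ : G'.degree v₂ = G.degree v₂ - 1 := by
    rw [← SimpleGraph.card_neighborFinset_eq_degree, hN'v₂,
      Finset.card_erase_of_mem (by rw [SimpleGraph.mem_neighborFinset]; exact hadj.symm),
      SimpleGraph.card_neighborFinset_eq_degree]
  have hdeg'other : ∀ v, v ≠ u → v ≠ w → v ≠ v₁ → v ≠ v₂ → G'.degree v = G.degree v := by
    intro v h1 h2 h3 h4
    rw [← SimpleGraph.card_neighborFinset_eq_degree, hN'other v h1 h2 h3 h4,
      SimpleGraph.card_neighborFinset_eq_degree]
  -- G' is connected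
  have hG'conn : G'.Connected := by
    rw [SimpleGraph.connected_iff]
    refine ⟨?_, hNe⟩
    have hstep : ∀ a b, G.Adj a b → G'.Reachable a b := by
      intro a b hab
      by_cases hcase : (a = v₁ ∧ b = v₂) ∨ (a = v₂ ∧ b = v₁)
      · rcases hcase with ⟨ha, hb⟩ | ⟨ha, hb⟩
        · rw [ha, hb]
          have h1 : G'.Adj v₁ u := by
            rw [hG'Adj]
            exact Or.inl ⟨hadj_uv₁.symm,
              by rintro (⟨-, h5⟩ | ⟨h5, -⟩); exacts [huv₂ h5, hv₁₂ h5]⟩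
          have h2 : G'.Adj u v₂ := by
            rw [hG'Adj]
            exact Or.inl ⟨hadj_uv₂,
              by rintro (⟨h5, -⟩ | ⟨h5, -⟩); exacts [huv₁ h5, huv₂ h5]⟩
          exact h1.reachable.trans h2.reachable
        · rw [ha, hb]
          have h1 : G'.Adj v₂ u := by
            rw [hG'Adj]
            exact Or.inl ⟨hadj_uv₂.symm,
              by rintro (⟨h5, -⟩ | ⟨-, h5⟩); exacts [hv₂₁ h5, huv₁ h5]⟩
          have h2 : G'.Adj u v₁ := by
            rw [hG'Adj]
            exact Or.inl ⟨hadj_uv₁,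
              by rintro (⟨h5, -⟩ | ⟨h5, -⟩); exacts [huv₁ h5, huv₂ h5]⟩
          exact h1.reachable.trans h2.reachable
      · exact (SimpleGraph.Adj.reachable (by rw [hG'Adj]; exact Or.inl ⟨hab, hcase⟩))
    intro a b
    obtain ⟨p⟩ := hconn a b
    induction p with
    | nil => exact SimpleGraph.Reachable.refl _
    | cons h p ih => exact (hstep _ _ h).trans ih
  -- Perron vectors
  obtain ⟨x, hxpos, hxeig⟩ := perron_qIndex G hconn
  obtain ⟨y, hypos, hyeig⟩ := perron_qIndex G' hG'conn
  set q : ℝ := qIndex G with hq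
  set q' : ℝ := qIndex G' with hq'
  have hxnn : ∀ v, 0 ≤ x v := fun v => (hxpos v).le
  have hynn : ∀ v, 0 ≤ y v := fun v => (hypos v).le
  -- pointwise eigen-equations
  have ex : ∀ v, (G.degree v : ℝ) * x v + ∑ z ∈ G.neighborFinset v, x z = q * x v := by
    intro v
    have h := congrFun hxeig v
    rw [qMatrix_mulVec] at h
    simpa using h
  have ey : ∀ v, (G'.degree v : ℝ) * y v + ∑ z ∈ G'.neighborFinset v, y z = q' * y v := by
    intro v
    have h := congrFun hyeig v
    rw [qMatrix_mulVec] at h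
    simpa using h
  -- casts
  have hdR : (5:ℝ) ≤ (G.degree u : ℝ) := by exact_mod_cast hdu
  have hd₁R : ((G.degree v₁ : ℕ) : ℝ) ≤ 4 := by exact_mod_cast hdegv₁
  have hd₂R : ((G.degree v₂ : ℕ) : ℝ) ≤ 4 := by exact_mod_cast hdegv₂
  -- not-mem facts for insert sums
  have hu_nm₁ : u ∉ insert w (insert v₂ P₁) := by
    simp only [Finset.mem_insert]
    push_neg
    exact ⟨huw, huv₂, hP₁nu⟩
  have hw_nm₁ : w ∉ insert v₂ P₁ := by
    simp only [Finset.mem_insert]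
    push_neg
    exact ⟨hwv₂', hP₁nw⟩
  have hv₂nm₁ : v₂ ∉ P₁ := Finset.notMem_erase _ _
  have hu_nm₂ : u ∉ insert w (insert v₁ P₂) := by
    simp only [Finset.mem_insert]
    push_neg
    exact ⟨huw, huv₁, hP₂nu⟩
  have hw_nm₂ : w ∉ insert v₁ P₂ := by
    simp only [Finset.mem_insert]
    push_neg
    exact ⟨hwv₁', hP₂nw⟩
  have hv₁nm₂ : v₁ ∉ P₂ := Finset.notMem_erase _ _
  have hu_nmP₁ : u ∉ insert w P₁ := by
    simp only [Finset.mem_insert]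
    push_neg
    exact ⟨huw, hP₁nu⟩
  have hu_nmP₂ : u ∉ insert w P₂ := by
    simp only [Finset.mem_insert]
    push_neg
    exact ⟨huw, hP₂nu⟩
  -- sum of nonneg z over union of both P's
  have hPsum : ∀ z : V → ℝ, (∀ t, 0 ≤ z t) →
      (∑ t ∈ P₁, z t) + (∑ t ∈ P₂, z t) ≤ (∑ t ∈ G.neighborFinset u, z t) - z v₁ - z v₂ := by
    intro z hz
    have h1 : (∑ t ∈ P₁, z t) + (∑ t ∈ P₂, z t) = ∑ t ∈ P₁ ∪ P₂, z t :=
      (Finset.sum_union hPdisj).symm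
    have h2 : ∑ t ∈ P₁ ∪ P₂, z t ≤ ∑ t ∈ ((G.neighborFinset u).erase v₂).erase v₁, z t :=
      Finset.sum_le_sum_of_subset_of_nonneg hPunion (fun t _ _ => hz t)
    have hv₁mem : v₁ ∈ (G.neighborFinset u).erase v₂ := by
      refine Finset.mem_erase.mpr ⟨hv₁₂, ?_⟩
      rw [SimpleGraph.mem_neighborFinset]
      exact hadj_uv₁
    have hv₂mem : v₂ ∈ G.neighborFinset u := by
      rw [SimpleGraph.mem_neighborFinset]
      exact hadj_uv₂
    have h3 := Finset.sum_erase_add ((G.neighborFinset u).erase v₂) z hv₁mem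
    have h4 := Finset.sum_erase_add (G.neighborFinset u) z hv₂mem
    linarith
  -- x-side inequalities
  have eu : (G.degree u : ℝ) * x u + ∑ z ∈ G.neighborFinset u, x z = q * x u := ex u
  have hSNx_nn : 0 ≤ ∑ z ∈ G.neighborFinset u, x z :=
    Finset.sum_nonneg fun z _ => hxnn z
  have hq5 : 5 ≤ q := by
    refine le_of_mul_le_mul_right ?_ (hxpos u)
    have h5 := mul_le_mul_of_nonneg_right hdR (hxnn u)
    linarith only [eu, h5, hSNx_nn]
  have ew : q * x w = 2 * x w + (x v₁ + x v₂) := by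
    have h := ex w
    rw [hdegw, hNwF] at h
    rw [Finset.sum_insert (by simpa using hv₁₂), Finset.sum_singleton] at h
    push_cast at h
    linarith
  have hx1 : q * x v₁ ≤ 4 * x v₁ + (x u + x w + x v₂ + ∑ t ∈ P₁, x t) := by
    have h := ex v₁
    have hle : ∑ z ∈ G.neighborFinset v₁, x z ≤ x u + x w + x v₂ + ∑ t ∈ P₁, x t := by
      calc ∑ z ∈ G.neighborFinset v₁, x z
          ≤ ∑ z ∈ insert u (insert w (insert v₂ P₁)), x z :=
            Finset.sum_le_sum_of_subset_of_nonneg hNv₁sub (fun t _ _ => hxnn t)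
        _ = x u + x w + x v₂ + ∑ t ∈ P₁, x t := by
            rw [Finset.sum_insert hu_nm₁, Finset.sum_insert hw_nm₁,
              Finset.sum_insert hv₂nm₁]
            ring
    linarith only [h, hle, mul_le_mul_of_nonneg_right hd₁R (hxnn v₁)]
  have hx2 : q * x v₂ ≤ 4 * x v₂ + (x u + x w + x v₁ + ∑ t ∈ P₂, x t) := by
    have h := ex v₂
    have hle : ∑ z ∈ G.neighborFinset v₂, x z ≤ x u + x w + x v₁ + ∑ t ∈ P₂, x t := by
      calc ∑ z ∈ G.neighborFinset v₂, x z
          ≤ ∑ z ∈ insert u (insert w (insert v₁ P₂)), x z :=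
            Finset.sum_le_sum_of_subset_of_nonneg hNv₂sub (fun t _ _ => hxnn t)
        _ = x u + x w + x v₁ + ∑ t ∈ P₂, x t := by
            rw [Finset.sum_insert hu_nm₂, Finset.sum_insert hw_nm₂,
              Finset.sum_insert hv₁nm₂]
            ring
    linarith only [h, hle, mul_le_mul_of_nonneg_right hd₂R (hxnn v₂)]
  have hSNx_le : ∑ z ∈ G.neighborFinset u, x z ≤ (q - 5) * x u := by
    linarith only [eu, mul_le_mul_of_nonneg_right hdR (hxnn u)]
  have E1x : (q - 4) * (x v₁ + x v₂) ≤ (q - 3) * x u + 2 * x w := by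
    have hP := hPsum x hxnn
    linarith only [hx1, hx2, hP, hSNx_le]
  -- y-side inequalities
  have hN'usum : ∑ z ∈ G'.neighborFinset u, y z = y w + ∑ z ∈ G.neighborFinset u, y z := by
    rw [hN'u, Finset.sum_insert hwNu]
  have eu' : ((G.degree u : ℝ) + 1) * y u + (y w + ∑ z ∈ G.neighborFinset u, y z)
      = q' * y u := by
    have h := ey u
    rw [hdeg'u, hN'usum] at h
    push_cast at h
    linarith
  have hSNy_nn : 0 ≤ ∑ z ∈ G.neighborFinset u, y z :=
    Finset.sum_nonneg fun z _ => hynn z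
  have hq'6 : 6 ≤ q' := by
    refine le_of_mul_le_mul_right ?_ (hypos u)
    have h5 := mul_le_mul_of_nonneg_right hdR (hynn u)
    linarith only [eu', h5, hSNy_nn, hynn w]
  have hSNy_le : ∑ z ∈ G.neighborFinset u, y z ≤ (q' - 6) * y u - y w := by
    linarith only [eu', mul_le_mul_of_nonneg_right hdR (hynn u)]
  have hsub₁' : (G.neighborFinset v₁).erase v₂ ⊆ insert u (insert w P₁) := by
    intro z hz
    obtain ⟨hzne, hzm⟩ := Finset.mem_erase.mp hz
    have hmem := hNv₁sub hzm
    rcases Finset.mem_insert.mp hmem with h | hmem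
    · exact Finset.mem_insert.mpr (Or.inl h)
    rcases Finset.mem_insert.mp hmem with h | hmem
    · exact Finset.mem_insert.mpr (Or.inr (Finset.mem_insert.mpr (Or.inl h)))
    rcases Finset.mem_insert.mp hmem with h | hmem
    · exact absurd h hzne
    · exact Finset.mem_insert.mpr (Or.inr (Finset.mem_insert.mpr (Or.inr hmem)))
  have hsub₂' : (G.neighborFinset v₂).erase v₁ ⊆ insert u (insert w P₂) := by
    intro z hz
    obtain ⟨hzne, hzm⟩ := Finset.mem_erase.mp hz
    have hmem := hNv₂sub hzm
    rcases Finset.mem_insert.mp hmem with h | hmem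
    · exact Finset.mem_insert.mpr (Or.inl h)
    rcases Finset.mem_insert.mp hmem with h | hmem
    · exact Finset.mem_insert.mpr (Or.inr (Finset.mem_insert.mpr (Or.inl h)))
    rcases Finset.mem_insert.mp hmem with h | hmem
    · exact absurd h hzne
    · exact Finset.mem_insert.mpr (Or.inr (Finset.mem_insert.mpr (Or.inr hmem)))
  have hdegpos₁ : 1 ≤ G.degree v₁ := by
    rw [← SimpleGraph.card_neighborFinset_eq_degree]
    exact Finset.card_pos.mpr ⟨v₂, by rw [SimpleGraph.mem_neighborFinset]; exact hadj⟩
  have hdegpos₂ : 1 ≤ G.degree v₂ := by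
    rw [← SimpleGraph.card_neighborFinset_eq_degree]
    exact Finset.card_pos.mpr ⟨v₁, by rw [SimpleGraph.mem_neighborFinset]; exact hadj.symm⟩
  have hd'₁R : ((G'.degree v₁ : ℕ) : ℝ) ≤ 3 := by
    rw [hdeg'v₁]
    have : G.degree v₁ - 1 ≤ 3 := by omega
    exact_mod_cast this
  have hd'₂R : ((G'.degree v₂ : ℕ) : ℝ) ≤ 3 := by
    rw [hdeg'v₂]
    have : G.degree v₂ - 1 ≤ 3 := by omega
    exact_mod_cast this
  have hy1 : q' * y v₁ ≤ 3 * y v₁ + (y u + y w + ∑ t ∈ P₁, y t) := by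
    have h := ey v₁
    rw [hN'v₁] at h
    have hle : ∑ z ∈ (G.neighborFinset v₁).erase v₂, y z ≤ y u + y w + ∑ t ∈ P₁, y t := by
      calc ∑ z ∈ (G.neighborFinset v₁).erase v₂, y z
          ≤ ∑ z ∈ insert u (insert w P₁), y z :=
            Finset.sum_le_sum_of_subset_of_nonneg hsub₁' (fun t _ _ => hynn t)
        _ = y u + y w + ∑ t ∈ P₁, y t := by
            rw [Finset.sum_insert hu_nmP₁, Finset.sum_insert hP₁nw]
            ring
    linarith only [h, hle, mul_le_mul_of_nonneg_right hd'₁R (hynn v₁)]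
  have hy2 : q' * y v₂ ≤ 3 * y v₂ + (y u + y w + ∑ t ∈ P₂, y t) := by
    have h := ey v₂
    rw [hN'v₂] at h
    have hle : ∑ z ∈ (G.neighborFinset v₂).erase v₁, y z ≤ y u + y w + ∑ t ∈ P₂, y t := by
      calc ∑ z ∈ (G.neighborFinset v₂).erase v₁, y z
          ≤ ∑ z ∈ insert u (insert w P₂), y z :=
            Finset.sum_le_sum_of_subset_of_nonneg hsub₂' (fun t _ _ => hynn t)
        _ = y u + y w + ∑ t ∈ P₂, y t := by
            rw [Finset.sum_insert hu_nmP₂, Finset.sum_insert hP₂nw]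
            ring
    linarith only [h, hle, mul_le_mul_of_nonneg_right hd'₂R (hynn v₂)]
  have E3y : (q' - 2) * (y v₁ + y v₂) ≤ (q' - 4) * y u + y w := by
    have hP := hPsum y hynn
    linarith only [hy1, hy2, hP, hSNy_le]
  -- the exchange identity
  have hdot_pos : 0 < dotProduct y x :=
    Finset.sum_pos (fun i _ => mul_pos (hypos i) (hxpos i)) Finset.univ_nonempty
  have hid : (q' - q) * dotProduct y x
      = (x u + x w) * (y u + y w) - (x v₁ + x v₂) * (y v₁ + y v₂) := by
    have hd1 : dotProduct y ((qMatrix G).mulVec x) = q * dotProduct y x := by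
      rw [hxeig, dotProduct_smul, smul_eq_mul]
    have hd2 : dotProduct y ((qMatrix G').mulVec x) = q' * dotProduct y x := by
      rw [sym_dot (qMatrix_isHermitian G') y x, hyeig, dotProduct_smul, smul_eq_mul,
        dotProduct_comm]
    have hdiff : dotProduct y ((qMatrix G').mulVec x)
        - dotProduct y ((qMatrix G).mulVec x)
        = ∑ v, y v * ((qMatrix G').mulVec x v - (qMatrix G).mulVec x v) := by
      unfold dotProduct
      rw [← Finset.sum_sub_distrib]
      exact Finset.sum_congr rfl fun v _ => by ring
    have cu : (qMatrix G').mulVec x u - (qMatrix G).mulVec x u = x u + x w := by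
      rw [qMatrix_mulVec, qMatrix_mulVec, hdeg'u, hN'u, Finset.sum_insert hwNu]
      push_cast
      ring
    have cw : (qMatrix G').mulVec x w - (qMatrix G).mulVec x w = x w + x u := by
      rw [qMatrix_mulVec, qMatrix_mulVec, hdeg'w, hdegw, hN'w, hNwF]
      have hnm1 : u ∉ ({v₁, v₂} : Finset V) := by
        simp only [Finset.mem_insert, Finset.mem_singleton]
        push_neg
        exact ⟨huv₁, huv₂⟩
      have hnm2 : v₁ ∉ ({v₂} : Finset V) := by simpa using hv₁₂
      rw [Finset.sum_insert hnm1, Finset.sum_insert hnm2, Finset.sum_singleton]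
      push_cast
      ring
    have cv₁ : (qMatrix G').mulVec x v₁ - (qMatrix G).mulVec x v₁ = -(x v₁ + x v₂) := by
      rw [qMatrix_mulVec, qMatrix_mulVec, hdeg'v₁, hN'v₁]
      have hsum := Finset.sum_erase_add (G.neighborFinset v₁) x
        (by rw [SimpleGraph.mem_neighborFinset]; exact hadj)
      have hc : ((G.degree v₁ - 1 : ℕ) : ℝ) = (G.degree v₁ : ℝ) - 1 := by
        have := Nat.cast_sub (R := ℝ) hdegpos₁
        simpa using this
      rw [hc]
      have h5 : ∑ z ∈ (G.neighborFinset v₁).erase v₂, x z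
          = (∑ z ∈ G.neighborFinset v₁, x z) - x v₂ := by linarith [hsum]
      rw [h5]
      ring
    have cv₂ : (qMatrix G').mulVec x v₂ - (qMatrix G).mulVec x v₂ = -(x v₁ + x v₂) := by
      rw [qMatrix_mulVec, qMatrix_mulVec, hdeg'v₂, hN'v₂]
      have hsum := Finset.sum_erase_add (G.neighborFinset v₂) x
        (by rw [SimpleGraph.mem_neighborFinset]; exact hadj.symm)
      have hc : ((G.degree v₂ - 1 : ℕ) : ℝ) = (G.degree v₂ : ℝ) - 1 := by
        have := Nat.cast_sub (R := ℝ) hdegpos₂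
        simpa using this
      rw [hc]
      have h5 : ∑ z ∈ (G.neighborFinset v₂).erase v₁, x z
          = (∑ z ∈ G.neighborFinset v₂, x z) - x v₁ := by linarith [hsum]
      rw [h5]
      ring
    have cother : ∀ v, v ≠ u → v ≠ w → v ≠ v₁ → v ≠ v₂ →
        (qMatrix G').mulVec x v - (qMatrix G).mulVec x v = 0 := by
      intro v h1 h2 h3 h4
      rw [qMatrix_mulVec, qMatrix_mulVec, hdeg'other v h1 h2 h3 h4, hN'other v h1 h2 h3 h4]
      ring
    have hset : ∑ v, y v * ((qMatrix G').mulVec x v - (qMatrix G).mulVec x v)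
        = ∑ v ∈ ({u, w, v₁, v₂} : Finset V), y v
            * ((qMatrix G').mulVec x v - (qMatrix G).mulVec x v) := by
      symm
      apply Finset.sum_subset (Finset.subset_univ _)
      intro v _ hv
      simp only [Finset.mem_insert, Finset.mem_singleton] at hv
      push_neg at hv
      rw [cother v hv.1 hv.2.1 hv.2.2.1 hv.2.2.2, mul_zero]
    have hfour : ∑ v ∈ ({u, w, v₁, v₂} : Finset V), y v
          * ((qMatrix G').mulVec x v - (qMatrix G).mulVec x v)
        = y u * (x u + x w) + y w * (x w + x u)
          + y v₁ * (-(x v₁ + x v₂)) + y v₂ * (-(x v₁ + x v₂)) := by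
      rw [Finset.sum_insert (by simp [huw, huv₁, huv₂]),
        Finset.sum_insert (by simp [hwv₁', hwv₂']),
        Finset.sum_insert (by simpa using hv₁₂), Finset.sum_singleton,
        cu, cw, cv₁, cv₂]
      ring
    rw [sub_mul, ← hd1, ← hd2, hdiff, hset, hfour]
    ring
  -- final contradiction
  by_contra hcon
  push_neg at hcon
  have hkey : (x u + x w) * (y u + y w) ≤ (x v₁ + x v₂) * (y v₁ + y v₂) := by
    have h5 : (q' - q) * dotProduct y x ≤ 0 :=
      mul_nonpos_of_nonpos_of_nonneg (by linarith only [hcon]) hdot_pos.le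
    linarith only [hid, h5]
  have ewb : (q - 2) * x w = x v₁ + x v₂ := by linarith only [ew]
  have e1m := mul_le_mul_of_nonneg_right E1x (show (0:ℝ) ≤ q - 2 by linarith)
  have k1 : (x v₁ + x v₂) * (q*q - 6*q + 6) ≤ (q-3)*(q-2)* x u := by
    nlinarith [e1m, ewb]

  have e2 : (q-3)*((q-2)* x w) = (q-3)*(x v₁ + x v₂) := by rw [ewb]
  have k2 : (x v₁ + x v₂) * (q*q - 5*q + 3) ≤ (q-3)*(q-2)*(x u + x w) := by
    linarith only [k1, e2]
  have k3 : (y v₁ + y v₂) * (q' - 2) ≤ (q'-4)*(y u + y w) := by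
    linarith only [E3y, mul_nonneg (show (0:ℝ) ≤ q' - 5 by linarith only [hq'6]) (hynn w)]
  have hSpos : 0 < x v₁ + x v₂ := by
    have h5 := hxpos v₁; have h6 := hxpos v₂; linarith
  have hTpos : 0 < y v₁ + y v₂ := by
    have h5 := hypos v₁; have h6 := hypos v₂; linarith
  have habpos : 0 < x u + x w := by
    have h5 := hxpos u; have h6 := hxpos w; linarith
  have hABpos : 0 < y u + y w := by
    have h5 := hypos u; have h6 := hypos w; linarith
  have m1 : ((x v₁ + x v₂) * (q*q - 5*q + 3)) * ((y v₁ + y v₂) * (q' - 2))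
      ≤ ((q-3)*(q-2)*(x u + x w)) * ((q'-4)*(y u + y w)) := by
    refine mul_le_mul k2 k3 ?_ ?_
    · have h5 : (0:ℝ) ≤ q' - 2 := by linarith
      positivity
    · have h5 : (0:ℝ) ≤ q - 3 := by linarith
      have h6 : (0:ℝ) ≤ q - 2 := by linarith
      positivity
  have hco : (0:ℝ) ≤ (q-3)*(q-2)*(q'-4) := by
    have h5 : (0:ℝ) ≤ q - 3 := by linarith
    have h6 : (0:ℝ) ≤ q - 2 := by linarith
    have h7 : (0:ℝ) ≤ q' - 4 := by linarith
    positivity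
  have m2 : ((q-3)*(q-2)*(x u + x w)) * ((q'-4)*(y u + y w))
      ≤ ((q-3)*(q-2)*(q'-4)) * ((x v₁ + x v₂) * (y v₁ + y v₂)) := by
    linarith only [mul_le_mul_of_nonneg_left hkey hco]
  have hST : 0 < (x v₁ + x v₂) * (y v₁ + y v₂) := mul_pos hSpos hTpos
  have hchain : (q*q - 5*q + 3) * (q' - 2) * ((x v₁ + x v₂) * (y v₁ + y v₂))
      ≤ (q-3)*(q-2)*(q'-4) * ((x v₁ + x v₂) * (y v₁ + y v₂)) := by
    linarith only [m1, m2]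
  have hfin : (q*q - 5*q + 3) * (q' - 2) ≤ (q-3)*(q-2)*(q'-4) :=
    le_of_mul_le_mul_right hchain hST
  have hqq6 : (6:ℝ) ≤ q := by linarith only [hcon, hq'6]
  linarith only [hfin, hcon, hq'6,
    mul_nonneg (show (0:ℝ) ≤ q - 6 by linarith only [hqq6])
      (show (0:ℝ) ≤ 2*q - 1 by linarith only [hqq6])]
end OuterplanarQ
end

section
/- Let G be a connected finite simple graph of order n ≥ 5 with a vertex u of degree n − 1 such that every vertex v ≠ u has degree d(v) ≤ 3. Let q = q(G) and let x be a positive eigenvector of Q(G) corresponding to the eigenvalue q, normalized so that x_u = 1. Then for every vertex v ≠ u, 1/q < x_v < 1/q + 30/q². -/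
open scoped Classical

namespace OuterplanarQ

/-- Claim 3.4 of the paper: eigenvector entry estimates. If `u` has degree `n - 1`,
every other vertex has degree at most 3, and `x` is a positive eigenvector of `Q(G)`
for the eigenvalue `q = q(G)` normalized by `x_u = 1`, then `1/q < x_v < 1/q + 30/q²`
for every `v ≠ u`. -/
theorem perron_entry_bounds
    {V : Type*} [Fintype V] {n : ℕ} (hn : 5 ≤ n)
    (G : SimpleGraph V) (hcard : Fintype.card V = n) (hconn : G.Connected)
    (u : V) (hdu : G.degree u = n - 1) (hd : ∀ v : V, v ≠ u → G.degree v ≤ 3)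
    (x : V → ℝ) (hpos : ∀ i : V, 0 < x i)
    (heig : (qMatrix G).mulVec x = qIndex G • x) (hxu : x u = 1) :
    ∀ v : V, v ≠ u → 1 / qIndex G < x v ∧ x v < 1 / qIndex G + 30 / (qIndex G) ^ 2 := by
  have hx0 : ∀ i : V, (0:ℝ) ≤ x i := fun i => (hpos i).le
  have hNsub : G.neighborFinset u ⊆ Finset.univ.erase u := by
    intro j hj
    rw [SimpleGraph.mem_neighborFinset] at hj
    exact Finset.mem_erase.2 ⟨hj.ne', Finset.mem_univ j⟩
  have hNu : G.neighborFinset u = Finset.univ.erase u := by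
    apply Finset.eq_of_subset_of_card_le hNsub
    rw [Finset.card_erase_of_mem (Finset.mem_univ u), Finset.card_univ, hcard]
    rw [show (G.neighborFinset u).card = G.degree u from rfl, hdu]
  have hadj : ∀ v : V, v ≠ u → G.Adj u v := by
    intro v hv
    rw [← SimpleGraph.mem_neighborFinset, hNu]
    exact Finset.mem_erase.2 ⟨hv, Finset.mem_univ v⟩
  set q := qIndex G with hqdef
  have key : ∀ i : V, (G.degree i : ℝ) * x i + ∑ j ∈ G.neighborFinset i, x j = q * x i := by
    intro i
    have h := congrFun heig i
    simp only [Matrix.mulVec, dotProduct, qMatrix, Pi.smul_apply, smul_eq_mul,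
      add_mul, ite_mul, zero_mul, one_mul, Finset.sum_add_distrib] at h
    rw [← h]
    congr 1
    · simp
    · rw [SimpleGraph.neighborFinset_eq_filter, Finset.sum_filter]
  set S := ∑ v ∈ Finset.univ.erase u, x v with hSdef
  have hqS : q = ((n - 1 : ℕ) : ℝ) + S := by
    have h := key u
    rw [hNu, hdu, hxu, mul_one, mul_one] at h
    exact h.symm
  have hn4 : (4:ℝ) ≤ ((n - 1 : ℕ) : ℝ) := by
    have : 4 ≤ n - 1 := by omega
    exact_mod_cast this
  have hSpos : 0 < S := by
    apply Finset.sum_pos (fun i _ => hpos i)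
    obtain ⟨v, hv⟩ := Fintype.exists_ne_of_one_lt_card (by omega : 1 < Fintype.card V) u
    exact ⟨v, Finset.mem_erase.2 ⟨hv, Finset.mem_univ v⟩⟩
  have hq4 : 4 < q := by rw [hqS]; linarith
  have hq0 : 0 < q := by linarith
  have hveq : ∀ v : V, v ≠ u →
      q * x v = (G.degree v : ℝ) * x v + 1 + ∑ j ∈ (G.neighborFinset v).erase u, x j := by
    intro v hv
    have hu : u ∈ G.neighborFinset v :=
      (SimpleGraph.mem_neighborFinset _ _ _).2 ((hadj v hv).symm)
    have h := key v
    rw [← Finset.add_sum_erase _ x hu, hxu] at h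
    linarith
  have hT0 : ∀ v : V, 0 ≤ ∑ j ∈ (G.neighborFinset v).erase u, x j :=
    fun v => Finset.sum_nonneg (fun j _ => hx0 j)
  have hdeg1 : ∀ v : V, v ≠ u → (1:ℝ) ≤ (G.degree v : ℝ) := by
    intro v hv
    have : 0 < G.degree v := by
      rw [← SimpleGraph.card_neighborFinset_eq_degree]
      exact Finset.card_pos.2 ⟨u, (SimpleGraph.mem_neighborFinset _ _ _).2 ((hadj v hv).symm)⟩
    exact_mod_cast this
  have hdeg3 : ∀ v : V, v ≠ u → (G.degree v : ℝ) ≤ 3 := by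
    intro v hv; exact_mod_cast hd v hv
  have hTle : ∀ v : V, v ≠ u →
      ∑ j ∈ (G.neighborFinset v).erase u, x j ≤ S - x v := by
    intro v hv
    have hsub : (G.neighborFinset v).erase u ⊆ (Finset.univ.erase u).erase v := by
      intro j hj
      obtain ⟨hju, hjm⟩ := Finset.mem_erase.1 hj
      rw [SimpleGraph.mem_neighborFinset] at hjm
      exact Finset.mem_erase.2 ⟨hjm.ne', Finset.mem_erase.2 ⟨hju, Finset.mem_univ j⟩⟩
    calc ∑ j ∈ (G.neighborFinset v).erase u, x j
        ≤ ∑ j ∈ (Finset.univ.erase u).erase v, x j :=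
          Finset.sum_le_sum_of_subset_of_nonneg hsub (fun i _ _ => hx0 i)
      _ = S - x v :=
          Finset.sum_erase_eq_sub (Finset.mem_erase.2 ⟨hv, Finset.mem_univ v⟩)
  intro v hv
  have hvmem : v ∈ Finset.univ.erase u := Finset.mem_erase.2 ⟨hv, Finset.mem_univ v⟩
  constructor
  · -- lower bound
    have h := hveq v hv
    have h1 : (1:ℝ) * x v ≤ (G.degree v : ℝ) * x v :=
      mul_le_mul_of_nonneg_right (hdeg1 v hv) (hx0 v)
    have h2 : 1 < q * x v := by nlinarith [hT0 v, hpos v]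
    rw [div_lt_iff₀ hq0]
    linarith [h2, mul_comm q (x v)]
  · -- upper bound
    have hrw : 1 / q + 30 / q ^ 2 = (q + 30) / q ^ 2 := by
      field_simp
    rw [hrw, lt_div_iff₀ (by positivity : (0:ℝ) < q ^ 2)]
    -- reduce to x v * q^2 < q + 30
    rcases le_or_gt q 6 with hq6 | hq6
    · -- small q case
      have hS4 : S ≤ q - 4 := by rw [hqS]; linarith
      have h := hveq v hv
      have h1 : (G.degree v : ℝ) * x v ≤ 3 * x v :=
        mul_le_mul_of_nonneg_right (hdeg3 v hv) (hx0 v)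
      have h2 : (q - 2) * x v ≤ q - 3 := by nlinarith [hTle v hv]
      have h3 : x v < 1 := by nlinarith
      nlinarith [pow_pos hq0 2, sq_nonneg q]
    · -- large q case: use max vertex
      obtain ⟨m, hmmem, hmmax⟩ :=
        Finset.exists_max_image (Finset.univ.erase u) x ⟨v, hvmem⟩
      have hmu : m ≠ u := (Finset.mem_erase.1 hmmem).1
      have hTm : ∑ j ∈ (G.neighborFinset m).erase u, x j ≤ 2 * x m := by
        have hcard : ((G.neighborFinset m).erase u).card ≤ 2 := by
          have hum : u ∈ G.neighborFinset m :=
            (SimpleGraph.mem_neighborFinset _ _ _).2 ((hadj m hmu).symm)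
          rw [Finset.card_erase_of_mem hum]
          have h3 := hd m hmu
          have : (G.neighborFinset m).card = G.degree m := rfl
          omega
        have hle : ∀ j ∈ (G.neighborFinset m).erase u, x j ≤ x m := by
          intro j hj
          obtain ⟨hju, hjm⟩ := Finset.mem_erase.1 hj
          exact hmmax j (Finset.mem_erase.2 ⟨hju, Finset.mem_univ j⟩)
        calc ∑ j ∈ (G.neighborFinset m).erase u, x j
            ≤ ((G.neighborFinset m).erase u).card • x m :=
              Finset.sum_le_card_nsmul _ _ _ hle
          _ = (((G.neighborFinset m).erase u).card : ℝ) * x m := nsmul_eq_mul _ _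
          _ ≤ 2 * x m := by
              apply mul_le_mul_of_nonneg_right _ (hx0 m)
              exact_mod_cast hcard
      have hm1 : (G.degree m : ℝ) * x m ≤ 3 * x m :=
        mul_le_mul_of_nonneg_right (hdeg3 m hmu) (hx0 m)
      have hqm : (q - 5) * x m ≤ 1 := by
        have h := hveq m hmu
        nlinarith
      have hvm : x v ≤ x m := hmmax v hvmem
      have h5 : (q - 5) * x v ≤ 1 := by
        calc (q - 5) * x v ≤ (q - 5) * x m :=
              mul_le_mul_of_nonneg_left hvm (by linarith)
          _ ≤ 1 := hqm
      nlinarith [mul_le_mul_of_nonneg_left h5 (sq_nonneg q), sq_nonneg q, hx0 v, hq0]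
end OuterplanarQ
end
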